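/- Reduced broken circuit complex of the Dirichlet matroid: fix any linear order on Ē = E ∪ {ê} in which ê is the minimal element. Then for every X ⊆ E: X contains no broken circuit of M(N) if and only if X contains no broken circuit of the graphic matroid M(Γ) and X contains no crossing of N. -/

import Mathlib

open scoped BigOperators Classical

noncomputable section

namespace DirichletPaper

variable {V : Type*} [Fintype V] [DecidableEq V]

/-- `(Γ, B)` is a network: `Γ` is a connected finite simple graph, there are at
least two boundary nodes, and no edge of `Γ` joins two boundary nodes. -/
structure IsNetwork (Γ : SimpleGraph V) (B : Finset V) : Prop where
  connected : Γ.Connected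
  two_le_card : 2 ≤ B.card
  boundary_independent : ∀ i ∈ B, ∀ j ∈ B, ¬ Γ.Adj i j

/-- A crossing of the network `(Γ, B)`: the edge set of a simple path in `Γ`
whose two endpoints are distinct boundary nodes and all of whose internal
vertices are interior (i.e. lie in `V ∖ B`). -/
def IsCrossing (Γ : SimpleGraph V) (B : Finset V) (X : Finset (Sym2 V)) : Prop :=
  ∃ (i j : V) (p : Γ.Walk i j), p.IsPath ∧ i ∈ B ∧ j ∈ B ∧ i ≠ j ∧
    (∀ v ∈ p.support, v ≠ i → v ≠ j → v ∉ B) ∧ X = p.edges.toFinset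

/-- A grove of the network `(Γ, B)`: an acyclic edge set `F ⊆ E` such that every
interior vertex is incident to an edge of `F` and every connected component of
the forest `F` contains a boundary node. -/
def IsGrove (Γ : SimpleGraph V) (B : Finset V) (F : Finset (Sym2 V)) : Prop :=
  (F : Set (Sym2 V)) ⊆ Γ.edgeSet ∧
  (SimpleGraph.fromEdgeSet (F : Set (Sym2 V))).IsAcyclic ∧
  (∀ v : V, v ∉ B → ∃ e ∈ F, v ∈ e) ∧
  (∀ v : V, ∃ b ∈ B, (SimpleGraph.fromEdgeSet (F : Set (Sym2 V))).Reachable v b)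

/-- `Σ₁`: groves containing exactly one crossing. -/
def Sigma1 (Γ : SimpleGraph V) (B : Finset V) (F : Finset (Sym2 V)) : Prop :=
  IsGrove Γ B F ∧ ∃! C : Finset (Sym2 V), IsCrossing Γ B C ∧ C ⊆ F

/-- `Σ₀`: groves containing no crossing. -/
def Sigma0 (Γ : SimpleGraph V) (B : Finset V) (F : Finset (Sym2 V)) : Prop :=
  IsGrove Γ B F ∧ ∀ C : Finset (Sym2 V), IsCrossing Γ B C → ¬ C ⊆ F

/-- The generating function `∑_{F ∈ S} ∏_{e ∈ F} x_e`. -/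
def groveSum (R : Type*) [CommRing R] (S : Finset (Sym2 V) → Prop) (x : Sym2 V → R) : R :=
  ∑ F ∈ Finset.univ.filter S, ∏ e ∈ F, x e

/-- `P₀(x) = ∑_{F ∈ Σ₀} ∏_{e ∈ F} x_e`. -/
def P0 (R : Type*) [CommRing R] (Γ : SimpleGraph V) (B : Finset V) (x : Sym2 V → R) : R :=
  groveSum R (Sigma0 Γ B) x

/-- `P₁(x) = ∑_{F ∈ Σ₁} ∏_{e ∈ F} x_e`. -/
def P1 (R : Type*) [CommRing R] (Γ : SimpleGraph V) (B : Finset V) (x : Sym2 V → R) : R :=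
  groveSum R (Sigma1 Γ B) x

/-- The ground set `Ē = E ∪ {ê}` of the Dirichlet matroid, realized inside
`Option (Sym2 V)`, with `ê = none` and an edge `e` realized as `some e`. -/
def ground (Γ : SimpleGraph V) : Finset (Option (Sym2 V)) :=
  insert none ((Finset.univ.filter (· ∈ Γ.edgeSet)).image some)

/-- Independent sets of the Dirichlet matroid `M(N)`: subsets of `F` for some
`F ∈ Σ₁`, or subsets of `F ∪ {ê}` for some `F ∈ Σ₀`. -/
def Indep (Γ : SimpleGraph V) (B : Finset V) (X : Finset (Option (Sym2 V))) : Prop :=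
  (∃ F, Sigma1 Γ B F ∧ X ⊆ F.image some) ∨
  (∃ F, Sigma0 Γ B F ∧ X ⊆ insert none (F.image some))

/-- Bases of `M(N)`: maximal independent sets. -/
def IsBasis (Γ : SimpleGraph V) (B : Finset V) (X : Finset (Option (Sym2 V))) : Prop :=
  Indep Γ B X ∧ ∀ Y, Indep Γ B Y → X ⊆ Y → Y = X

/-- Circuits of `M(N)`: minimal dependent subsets of the ground set. -/
def IsCircuit (Γ : SimpleGraph V) (B : Finset V) (X : Finset (Option (Sym2 V))) : Prop :=
  X ⊆ ground Γ ∧ ¬ Indep Γ B X ∧ ∀ Y ⊂ X, Indep Γ B Y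

/-- The rank function of `M(N)`. -/
def rk (Γ : SimpleGraph V) (B : Finset V) (X : Finset (Option (Sym2 V))) : ℕ :=
  (X.powerset.filter (Indep Γ B)).sup Finset.card

/-- Independent sets of the graphic matroid of `G`: edge sets of forests. -/
def IndepG (G : SimpleGraph V) (X : Finset (Sym2 V)) : Prop :=
  (X : Set (Sym2 V)) ⊆ G.edgeSet ∧ (SimpleGraph.fromEdgeSet (X : Set (Sym2 V))).IsAcyclic

/-- Circuits of the graphic matroid of `G`. -/
def IsCircuitG (G : SimpleGraph V) (X : Finset (Sym2 V)) : Prop :=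
  (X : Set (Sym2 V)) ⊆ G.edgeSet ∧ ¬ IndepG G X ∧ ∀ Y ⊂ X, IndepG G Y

/-- The edge set of `G` as a `Finset`. -/
def edgeFinset' (G : SimpleGraph V) : Finset (Sym2 V) :=
  Finset.univ.filter (· ∈ G.edgeSet)

/-- The rank function of the graphic matroid of `G`. -/
def rkG (G : SimpleGraph V) (X : Finset (Sym2 V)) : ℕ :=
  (X.powerset.filter (IndepG G)).sup Finset.card

/-- The characteristic polynomial `χ(λ) = ∑_{X ⊆ S} (-1)^{|X|} λ^{r(S) - r(X)}`
of a matroid with ground set `S` and rank function `r`. -/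
def charPolyOf {α : Type*} [DecidableEq α] (S : Finset α) (r : Finset α → ℕ) : Polynomial ℤ :=
  ∑ X ∈ S.powerset, Polynomial.C ((-1 : ℤ) ^ X.card) * Polynomial.X ^ (r S - r X)

/-- The graph `Γ̂` obtained from `Γ` by adding an edge between each pair of
distinct boundary nodes. -/
def hatGraph (Γ : SimpleGraph V) (B : Finset V) : SimpleGraph V where
  Adj i j := Γ.Adj i j ∨ (i ∈ B ∧ j ∈ B ∧ i ≠ j)
  symm := by
    constructor
    intro i j h
    rcases h with h | ⟨hi, hj, hne⟩
    · exact Or.inl h.symm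
    · exact Or.inr ⟨hj, hi, hne.symm⟩
  loopless := by
    constructor
    intro i h
    rcases h with h | ⟨-, -, hne⟩
    · exact Γ.irrefl h
    · exact hne rfl

/-- The weighted Laplacian matrix of `Γ` with edge weights `x`. -/
def lap (Γ : SimpleGraph V) (x : Sym2 V → ℂ) : Matrix V V ℂ := fun i j =>
  if i = j then ∑ k ∈ Finset.univ.filter (fun k => Γ.Adj i k), x s(i, k)
  else if Γ.Adj i j then -x s(i, j) else 0

/-- The boundary-boundary block `A` of the Laplacian. -/
def lapA (Γ : SimpleGraph V) (B : Finset V) (x : Sym2 V → ℂ) :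
    Matrix {v : V // v ∈ B} {v : V // v ∈ B} ℂ :=
  (lap Γ x).submatrix Subtype.val Subtype.val

/-- The interior-interior block `D` of the Laplacian. -/
def lapD (Γ : SimpleGraph V) (B : Finset V) (x : Sym2 V → ℂ) :
    Matrix {v : V // v ∉ B} {v : V // v ∉ B} ℂ :=
  (lap Γ x).submatrix Subtype.val Subtype.val

/-- The boundary-interior block `B₀` of the Laplacian. -/
def lapB (Γ : SimpleGraph V) (B : Finset V) (x : Sym2 V → ℂ) :
    Matrix {v : V // v ∈ B} {v : V // v ∉ B} ℂ :=
  (lap Γ x).submatrix Subtype.val Subtype.val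

/-- The response matrix `Λ(x) = A - B₀ D⁻¹ B₀ᵀ` of the network. -/
def response (Γ : SimpleGraph V) (B : Finset V) (x : Sym2 V → ℂ) :
    Matrix {v : V // v ∈ B} {v : V // v ∈ B} ℂ :=
  lapA Γ B x - lapB Γ B x * (lapD Γ B x)⁻¹ * (lapB Γ B x).transpose

/-- `P₀` as a real multivariate polynomial in the variables `x_e`. -/
def P0mv (Γ : SimpleGraph V) (B : Finset V) : MvPolynomial (Sym2 V) ℝ :=
  ∑ F ∈ Finset.univ.filter (Sigma0 Γ B), ∏ e ∈ F, MvPolynomial.X e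

/-- `P₁` as a real multivariate polynomial in the variables `x_e`. -/
def P1mv (Γ : SimpleGraph V) (B : Finset V) : MvPolynomial (Sym2 V) ℝ :=
  ∑ F ∈ Finset.univ.filter (Sigma1 Γ B), ∏ e ∈ F, MvPolynomial.X e

/-- `E_{ef}(g, h) = ∂_e g · ∂_f h + ∂_f g · ∂_e h - g · ∂_e ∂_f h - ∂_e ∂_f g · h`. -/
def Emix {σ : Type*} (e f : σ) (g h : MvPolynomial σ ℝ) : MvPolynomial σ ℝ :=
  MvPolynomial.pderiv e g * MvPolynomial.pderiv f h +
    MvPolynomial.pderiv f g * MvPolynomial.pderiv e h -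
    g * MvPolynomial.pderiv e (MvPolynomial.pderiv f h) -
    MvPolynomial.pderiv e (MvPolynomial.pderiv f g) * h

/-- `Δ_{ef}(g) = ∂_e g · ∂_f g - g · ∂_e ∂_f g`, the Rayleigh difference. -/
def Delta {σ : Type*} (e f : σ) (g : MvPolynomial σ ℝ) : MvPolynomial σ ℝ :=
  MvPolynomial.pderiv e g * MvPolynomial.pderiv f g -
    g * MvPolynomial.pderiv e (MvPolynomial.pderiv f g)

/-- The block of the network containing the vertex `i`: all `j ∈ V` reachable
from `i` by a path all of whose vertices except possibly the final one are
interior. -/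
def blockOf (Γ : SimpleGraph V) (B : Finset V) (i : V) : Finset V :=
  Finset.univ.filter (fun j => ∃ p : Γ.Walk i j, p.IsPath ∧ ∀ v ∈ p.support, v ≠ j → v ∉ B)

/-- With respect to a linear order on the ground set (encoded by an injection
`ord` into `ℕ`), a broken circuit of a matroid with circuit predicate `Circ` is
a set of the form `C ∖ {min C}` with `C` a circuit. -/
def IsBrokenCircuit {α : Type*} [DecidableEq α] (Circ : Finset α → Prop) (ord : α → ℕ)
    (X : Finset α) : Prop :=
  ∃ (C : Finset α) (m : α), Circ C ∧ m ∈ C ∧ (∀ y ∈ C, ord m ≤ ord y) ∧ X = C.erase m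


set_option linter.unusedSectionVars false

open SimpleGraph

set_option linter.unusedSectionVars false

lemma isAcyclic_mono {G G' : SimpleGraph V} (h : G ≤ G') (hG' : G'.IsAcyclic) : G.IsAcyclic := by
  intro v c hc
  exact hG' (c.transfer G' (fun e he => edgeSet_mono h (c.edges_subset_edgeSet he))) (hc.transfer _)

lemma path_delete_reach {G : SimpleGraph V} {u x : V} :
    ∀ {i j : V} (p : G.Walk i j), p.IsPath → s(u,x) ∈ p.edges →
    ((G.deleteEdges {s(u,x)}).Reachable i u ∧ (G.deleteEdges {s(u,x)}).Reachable j x) ∨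
    ((G.deleteEdges {s(u,x)}).Reachable i x ∧ (G.deleteEdges {s(u,x)}).Reachable j u) := by
  intro i j p
  induction p with
  | nil => intro _ he; simp at he
  | @cons a b c h q ih =>
    intro hp he
    rw [Walk.edges_cons, List.mem_cons] at he
    rcases he with he | he
    · -- first edge is the deleted edge
      have hq : ∀ e' ∈ q.edges, e' ∈ (G.deleteEdges {s(u,x)}).edgeSet := by
        intro e' he'
        have h1 : e' ∈ G.edgeSet := q.edges_subset_edgeSet he'
        have h2 : e' ≠ s(u,x) := by
          intro h2; subst h2
          have := hp.isTrail.edges_nodup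
          rw [Walk.edges_cons] at this
          exact (List.nodup_cons.mp this).1 (he ▸ he')
        rw [edgeSet_deleteEdges]
        exact ⟨h1, by simpa using h2⟩
      have hbj : (G.deleteEdges {s(u,x)}).Reachable b c := ⟨q.transfer _ hq⟩
      rw [Sym2.eq_iff] at he
      rcases he with ⟨rfl, rfl⟩ | ⟨rfl, rfl⟩
      · exact Or.inl ⟨Reachable.refl _, hbj.symm⟩
      · exact Or.inr ⟨Reachable.refl _, hbj.symm⟩
    · have hadj : (G.deleteEdges {s(u,x)}).Adj a b := by
        rw [deleteEdges_adj]
        refine ⟨h, ?_⟩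
        simp only [Set.mem_singleton_iff]
        intro h2
        have := hp.isTrail.edges_nodup
        rw [Walk.edges_cons] at this
        exact (List.nodup_cons.mp this).1 (by rw [h2]; exact he)
      rcases ih hp.of_cons he with ⟨h1, h2⟩ | ⟨h1, h2⟩
      · exact Or.inl ⟨hadj.reachable.trans h1, h2⟩
      · exact Or.inr ⟨hadj.reachable.trans h1, h2⟩

lemma not_reach_delete_of_acyclic {G : SimpleGraph V} (hG : G.IsAcyclic) {u x : V}
    (h : G.Adj u x) : ¬ (G.deleteEdges {s(u,x)}).Reachable u x := by
  intro hr
  obtain ⟨w, c, hc, -⟩ := (adj_and_reachable_delete_edges_iff_exists_cycle).mp ⟨h, hr⟩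
  exact hG c hc

lemma exists_edge_of_reachable {G : SimpleGraph V} {v b : V} (h : G.Reachable v b)
    (hne : v ≠ b) : ∃ y, G.Adj v y := by
  obtain ⟨w⟩ := h
  cases w with
  | nil => exact absurd rfl hne
  | cons h' _ => exact ⟨_, h'⟩

lemma exists_frontier {Γ : SimpleGraph V} (P : V → Prop) :
    ∀ {v t : V}, Γ.Walk v t → ¬ P v → P t → ∃ u x, Γ.Adj u x ∧ ¬ P u ∧ P x := by
  intro v t w
  induction w with
  | nil => intro h h'; exact absurd h' h
  | @cons a b c h q ih =>
    intro hv ht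
    by_cases hb : P b
    · exact ⟨a, b, h, hv, hb⟩
    · exact ih hb ht

lemma exists_minimal_not {α : Type*} [DecidableEq α] (P : Finset α → Prop) :
    ∀ (n : ℕ) (S : Finset α), S.card ≤ n → ¬ P S →
      ∃ D, D ⊆ S ∧ ¬ P D ∧ ∀ Y ⊂ D, P Y := by
  intro n
  induction n with
  | zero =>
    intro S hS hP
    refine ⟨S, subset_rfl, hP, fun Y hY => ?_⟩
    rw [Finset.card_eq_zero.mp (Nat.le_zero.mp hS)] at hY
    exact absurd hY (Finset.not_ssubset_empty Y)
  | succ n ih =>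
    intro S hS hP
    by_cases h : ∀ Y ⊂ S, P Y
    · exact ⟨S, subset_rfl, hP, h⟩
    · push_neg at h
      obtain ⟨Y, hYS, hYP⟩ := h
      obtain ⟨D, hD1, hD2, hD3⟩ := ih Y (by
        have := Finset.card_lt_card hYS; omega) hYP
      exact ⟨D, hD1.trans hYS.subset, hD2, hD3⟩


lemma cross_aux (Γ : SimpleGraph V) (B : Finset V) (F : Finset (Sym2 V))
    (hF : (F : Set (Sym2 V)) ⊆ Γ.edgeSet) :
    ∀ (n : ℕ) {b b' : V}, b ∈ B → b' ∈ B → b ≠ b' →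
      ∀ p : (SimpleGraph.fromEdgeSet (F : Set (Sym2 V))).Walk b b', p.IsPath → p.length ≤ n →
      ∃ C, IsCrossing Γ B C ∧ C ⊆ F := by
  intro n
  induction n with
  | zero =>
    intro b b' hb hb' hne p hp hlen
    exact absurd (SimpleGraph.Walk.eq_of_length_eq_zero (Nat.le_zero.mp hlen)) hne
  | succ n ih =>
    intro b b' hb hb' hne p hp hlen
    by_cases hall : ∀ v ∈ p.support, v ≠ b → v ≠ b' → v ∉ B
    · have hedge : ∀ e ∈ p.edges, e ∈ Γ.edgeSet := by
        intro e he
        have h := p.edges_subset_edgeSet he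
        rw [SimpleGraph.edgeSet_fromEdgeSet] at h
        exact hF h.1
      refine ⟨p.edges.toFinset, ⟨b, b', p.transfer Γ hedge, hp.transfer _, hb, hb', hne, ?_, ?_⟩, ?_⟩
      · rw [SimpleGraph.Walk.support_transfer]; exact hall
      · rw [SimpleGraph.Walk.edges_transfer]
      · intro e he
        rw [List.mem_toFinset] at he
        have h := p.edges_subset_edgeSet he
        rw [SimpleGraph.edgeSet_fromEdgeSet] at h
        exact h.1
    · push_neg at hall
      obtain ⟨w, hw, hwb, hwb', hwB⟩ := hall
      have hq := hp.takeUntil hw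
      have hlen' : (p.takeUntil w hw).length ≤ n := by
        have hspec := p.take_spec hw
        have hlen2 : (p.takeUntil w hw).length + (p.dropUntil w hw).length = p.length := by
          rw [← SimpleGraph.Walk.length_append, hspec]
        have hdrop : (p.dropUntil w hw).length ≠ 0 := by
          intro h0
          exact hwb' (SimpleGraph.Walk.eq_of_length_eq_zero h0)
        omega
      exact ih hb hwB (Ne.symm hwb) (p.takeUntil w hw) hq hlen'

lemma exists_crossing_of_reachable (Γ : SimpleGraph V) (B : Finset V) {F : Finset (Sym2 V)}
    (hF : (F : Set (Sym2 V)) ⊆ Γ.edgeSet) {b b' : V} (hb : b ∈ B) (hb' : b' ∈ B) (hne : b ≠ b')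
    (h : (SimpleGraph.fromEdgeSet (F : Set (Sym2 V))).Reachable b b') :
    ∃ C, IsCrossing Γ B C ∧ C ⊆ F := by
  obtain ⟨w⟩ := h
  exact cross_aux Γ B F hF w.toPath.1.length hb hb' hne w.toPath.1 w.toPath.2 le_rfl

def unreachSet (Γ : SimpleGraph V) (B : Finset V) (F : Finset (Sym2 V)) : Finset V :=
  Finset.univ.filter fun v =>
    ¬ ∃ b ∈ B, (SimpleGraph.fromEdgeSet (F : Set (Sym2 V))).Reachable v b

lemma grove_of_unreach_empty (Γ : SimpleGraph V) (B : Finset V) (F₀ : Finset (Sym2 V))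
    (h1 : (F₀ : Set (Sym2 V)) ⊆ Γ.edgeSet)
    (h2 : (SimpleGraph.fromEdgeSet (F₀ : Set (Sym2 V))).IsAcyclic)
    (hemp : unreachSet Γ B F₀ = ∅) : IsGrove Γ B F₀ := by
  have hreach : ∀ v : V, ∃ b ∈ B, (SimpleGraph.fromEdgeSet (F₀ : Set (Sym2 V))).Reachable v b := by
    intro v
    by_contra h
    have hv : v ∈ unreachSet Γ B F₀ := by
      rw [unreachSet, Finset.mem_filter]; exact ⟨Finset.mem_univ v, h⟩
    rw [hemp] at hv
    exact absurd hv (Finset.notMem_empty v)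
  refine ⟨h1, h2, ?_, hreach⟩
  intro v hv
  obtain ⟨b, hbB, hr⟩ := hreach v
  have hvb : v ≠ b := fun h => hv (h ▸ hbB)
  obtain ⟨y, hy⟩ := exists_edge_of_reachable hr hvb
  rw [SimpleGraph.fromEdgeSet_adj] at hy
  exact ⟨s(v,y), Finset.mem_coe.mp hy.1, Sym2.mem_mk_left v y⟩

lemma grove_extend (Γ : SimpleGraph V) (B : Finset V) (hN : IsNetwork Γ B) :
    ∀ (n : ℕ) (F₀ : Finset (Sym2 V)), (unreachSet Γ B F₀).card ≤ n →
      (F₀ : Set (Sym2 V)) ⊆ Γ.edgeSet →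
      (SimpleGraph.fromEdgeSet (F₀ : Set (Sym2 V))).IsAcyclic →
      ∃ F, IsGrove Γ B F ∧ F₀ ⊆ F ∧ ∀ C, IsCrossing Γ B C → C ⊆ F → C ⊆ F₀ := by
  intro n
  induction n with
  | zero =>
    intro F₀ hcard h1 h2
    have hemp : unreachSet Γ B F₀ = ∅ := Finset.card_eq_zero.mp (Nat.le_zero.mp hcard)
    exact ⟨F₀, grove_of_unreach_empty Γ B F₀ h1 h2 hemp, subset_rfl, fun C _ h => h⟩
  | succ n ih =>
    intro F₀ hcard h1 h2
    by_cases hemp : unreachSet Γ B F₀ = ∅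
    · exact ⟨F₀, grove_of_unreach_empty Γ B F₀ h1 h2 hemp, subset_rfl, fun C _ h => h⟩
    · obtain ⟨v₀, hv₀⟩ := Finset.nonempty_iff_ne_empty.mpr hemp
      rw [unreachSet, Finset.mem_filter] at hv₀
      have hPv₀ := hv₀.2
      obtain ⟨b₀, hb₀⟩ := Finset.card_pos.mp (lt_of_lt_of_le (by norm_num) hN.two_le_card)
      obtain ⟨w⟩ := hN.connected.preconnected v₀ b₀
      obtain ⟨u, x, hadj, hPu, hPx⟩ := exists_frontier
        (fun v => ∃ b ∈ B, (SimpleGraph.fromEdgeSet (F₀ : Set (Sym2 V))).Reachable v b) w hPv₀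
        ⟨b₀, hb₀, SimpleGraph.Reachable.refl b₀⟩
      set G0 := SimpleGraph.fromEdgeSet (F₀ : Set (Sym2 V)) with hG0
      set F₁ := insert s(u,x) F₀ with hF₁
      have hcoe : (F₁ : Set (Sym2 V)) = insert s(u,x) (F₀ : Set (Sym2 V)) := by
        rw [hF₁]; exact Finset.coe_insert _ _
      set G1 := SimpleGraph.fromEdgeSet (F₁ : Set (Sym2 V)) with hG1
      have hux : u ≠ x := hadj.ne
      have h1' : (F₁ : Set (Sym2 V)) ⊆ Γ.edgeSet := by
        rw [hcoe]; exact Set.insert_subset (Γ.mem_edgeSet.mpr hadj) h1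
      have hG0le : G0 ≤ G1 :=
        SimpleGraph.fromEdgeSet_mono (by rw [hcoe]; exact Set.subset_insert _ _)
      have hnr : ¬ G0.Reachable u x := by
        intro hr
        obtain ⟨b, hbB, hrb⟩ := hPx
        exact hPu ⟨b, hbB, hr.trans hrb⟩
      have hle : G1.deleteEdges {s(u,x)} ≤ G0 := by
        intro a b hab
        rw [SimpleGraph.deleteEdges_adj] at hab
        obtain ⟨hab1, hab2⟩ := hab
        rw [hG1, SimpleGraph.fromEdgeSet_adj] at hab1
        rw [hG0, SimpleGraph.fromEdgeSet_adj]
        refine ⟨?_, hab1.2⟩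
        have hm := hab1.1
        rw [hcoe] at hm
        rcases hm with h | h
        · exact absurd h (by simpa using hab2)
        · exact h
      have hadj1 : G1.Adj u x := by
        rw [hG1, SimpleGraph.fromEdgeSet_adj]
        exact ⟨by rw [hcoe]; exact Set.mem_insert _ _, hux⟩
      have h2' : G1.IsAcyclic := by
        intro vv c hc
        by_cases hce : s(u,x) ∈ c.edges
        · have hcyc := (SimpleGraph.adj_and_reachable_delete_edges_iff_exists_cycle).mpr
            ⟨vv, c, hc, hce⟩
          exact hnr (SimpleGraph.Reachable.mono hle hcyc.2)
        · refine h2 (c.transfer G0 ?_) (hc.transfer _)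
          intro e' he'
          have hm := c.edges_subset_edgeSet he'
          rw [hG1, SimpleGraph.edgeSet_fromEdgeSet] at hm
          rw [hG0, SimpleGraph.edgeSet_fromEdgeSet]
          refine ⟨?_, hm.2⟩
          have hm1 := hm.1
          rw [hcoe] at hm1
          rcases hm1 with h | h
          · rw [h] at he'; exact absurd he' hce
          · exact h
      have hcard' : (unreachSet Γ B F₁).card ≤ n := by
        have hss : unreachSet Γ B F₁ ⊂ unreachSet Γ B F₀ := by
          rw [Finset.ssubset_def]
          constructor
          · intro v hv
            rw [unreachSet, Finset.mem_filter] at hv ⊢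
            refine ⟨Finset.mem_univ v, ?_⟩
            intro hPv
            obtain ⟨b, hbB, hr⟩ := hPv
            exact hv.2 ⟨b, hbB, SimpleGraph.Reachable.mono hG0le hr⟩
          · intro hsub
            have humem : u ∈ unreachSet Γ B F₀ := by
              rw [unreachSet, Finset.mem_filter]; exact ⟨Finset.mem_univ u, hPu⟩
            have hu1 := hsub humem
            rw [unreachSet, Finset.mem_filter] at hu1
            obtain ⟨b, hbB, hrb⟩ := hPx
            exact hu1.2 ⟨b, hbB, hadj1.reachable.trans (SimpleGraph.Reachable.mono hG0le hrb)⟩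
        have := Finset.card_lt_card hss
        omega
      obtain ⟨F, hgrove, hsub, hcr⟩ := ih F₁ hcard' h1' h2'
      refine ⟨F, hgrove, (Finset.subset_insert _ _).trans hsub, ?_⟩
      intro C hC hCF
      have hCF₁ := hcr C hC hCF
      by_cases heC : s(u,x) ∈ C
      · exfalso
        obtain ⟨i, j, p, hp, hiB, hjB, hij, hint, hCeq⟩ := hC
        have hpe : ∀ e' ∈ p.edges, e' ∈ G1.edgeSet := by
          intro e' he'
          rw [hG1, SimpleGraph.edgeSet_fromEdgeSet]
          have h1'' : e' ∈ C := by rw [hCeq]; exact List.mem_toFinset.mpr he'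
          exact ⟨Finset.mem_coe.mpr (hCF₁ h1''),
            fun hd => (Γ.not_isDiag_of_mem_edgeSet (p.edges_subset_edgeSet he')) hd⟩
        have hpedge : s(u,x) ∈ (p.transfer G1 hpe).edges := by
          rw [SimpleGraph.Walk.edges_transfer]
          have h3 : s(u,x) ∈ p.edges.toFinset := hCeq ▸ heC
          exact List.mem_toFinset.mp h3
        rcases path_delete_reach (p.transfer G1 hpe) (hp.transfer _) hpedge with
          ⟨hr1, hr2⟩ | ⟨hr1, hr2⟩
        · exact hPu ⟨i, hiB, (SimpleGraph.Reachable.mono hle hr1).symm⟩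
        · exact hPu ⟨j, hjB, (SimpleGraph.Reachable.mono hle hr2).symm⟩
      · intro e' he'
        have hm := hCF₁ he'
        rw [hF₁, Finset.mem_insert] at hm
        rcases hm with h | h
        · rw [h] at he'; exact absurd he' heC
        · exact h

lemma grove_extend' {Γ : SimpleGraph V} {B : Finset V} (hN : IsNetwork Γ B)
    (F₀ : Finset (Sym2 V)) (h1 : (F₀ : Set (Sym2 V)) ⊆ Γ.edgeSet)
    (h2 : (SimpleGraph.fromEdgeSet (F₀ : Set (Sym2 V))).IsAcyclic) :
    ∃ F, IsGrove Γ B F ∧ F₀ ⊆ F ∧ ∀ C, IsCrossing Γ B C → C ⊆ F → C ⊆ F₀ :=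
  grove_extend Γ B hN (unreachSet Γ B F₀).card F₀ le_rfl h1 h2

lemma crossing_nonempty {Γ : SimpleGraph V} {B : Finset V} {C : Finset (Sym2 V)}
    (h : IsCrossing Γ B C) : C.Nonempty := by
  obtain ⟨i, j, p, hp, hiB, hjB, hij, hint, hCeq⟩ := h
  rw [Finset.nonempty_iff_ne_empty]
  intro h0
  rw [h0] at hCeq
  have hed : p.edges = [] := by
    have := hCeq.symm
    rwa [List.toFinset_eq_empty_iff] at this
  have : p.length = 0 := by
    have := congrArg List.length hed
    rwa [SimpleGraph.Walk.length_edges] at this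
  exact hij (SimpleGraph.Walk.eq_of_length_eq_zero this)

lemma crossing_edge_subset {Γ : SimpleGraph V} {B : Finset V} {C : Finset (Sym2 V)}
    (h : IsCrossing Γ B C) : (C : Set (Sym2 V)) ⊆ Γ.edgeSet := by
  obtain ⟨i, j, p, hp, hiB, hjB, hij, hint, hCeq⟩ := h
  intro e he
  rw [Finset.mem_coe, hCeq, List.mem_toFinset] at he
  exact p.edges_subset_edgeSet he

lemma indep_empty {Γ : SimpleGraph V} {B : Finset V} (hN : IsNetwork Γ B) :
    Indep Γ B ∅ := by
  obtain ⟨F, hg, -, hcr⟩ := grove_extend' hN ∅ (by simp) (by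
    rw [Finset.coe_empty, SimpleGraph.fromEdgeSet_empty]
    exact SimpleGraph.isAcyclic_bot)
  refine Or.inr ⟨F, ⟨hg, ?_⟩, Finset.empty_subset _⟩
  intro C hC hCF
  have := hcr C hC hCF
  exact absurd (Finset.subset_empty.mp this) (Finset.nonempty_iff_ne_empty.mp
    (crossing_nonempty hC))


lemma crossing_swap_lemma (Γ : SimpleGraph V) (B : Finset V) (D' : Finset (Sym2 V))
    (hD'E : (D' : Set (Sym2 V)) ⊆ Γ.edgeSet)
    (hforest : (SimpleGraph.fromEdgeSet (D' : Set (Sym2 V))).IsAcyclic)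
    {C₁ C₂ : Finset (Sym2 V)} {e : Sym2 V}
    (h1 : IsCrossing Γ B C₁) (h2 : IsCrossing Γ B C₂) (hs1 : C₁ ⊆ D') (hs2 : C₂ ⊆ D')
    (hne : C₁ ≠ C₂) (he1 : e ∈ C₁) (he2 : e ∈ C₂) :
    ∃ C₃, IsCrossing Γ B C₃ ∧ C₃ ⊆ D'.erase e := by
  revert he1 he2
  induction e using Sym2.ind with
  | _ u x =>
  intro he1 he2
  set H := SimpleGraph.fromEdgeSet (D' : Set (Sym2 V)) with hH
  have hadj : H.Adj u x := by
    rw [hH, SimpleGraph.fromEdgeSet_adj]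
    refine ⟨Finset.mem_coe.mpr (hs1 he1), ?_⟩
    have hmem := hD'E (Finset.mem_coe.mpr (hs1 he1))
    exact (Γ.mem_edgeSet.mp hmem).ne
  have hnr := not_reach_delete_of_acyclic hforest hadj
  have hle2 : H.deleteEdges {s(u,x)} ≤
      SimpleGraph.fromEdgeSet ((D'.erase s(u,x) : Finset (Sym2 V)) : Set (Sym2 V)) := by
    intro a b hab
    rw [SimpleGraph.deleteEdges_adj] at hab
    rw [SimpleGraph.fromEdgeSet_adj]
    obtain ⟨hab1, hab2⟩ := hab
    rw [hH, SimpleGraph.fromEdgeSet_adj] at hab1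
    refine ⟨?_, hab1.2⟩
    rw [Finset.mem_coe, Finset.mem_erase]
    exact ⟨by simpa using hab2, Finset.mem_coe.mp hab1.1⟩
  have key : ∀ y z : V, y ∈ B → z ∈ B → y ≠ z →
      (H.deleteEdges {s(u,x)}).Reachable y z →
      ∃ C₃, IsCrossing Γ B C₃ ∧ C₃ ⊆ D'.erase s(u,x) := by
    intro y z hy hz hyz hr
    refine exists_crossing_of_reachable Γ B ?_ hy hz hyz (SimpleGraph.Reachable.mono hle2 hr)
    intro a ha
    rw [Finset.mem_coe, Finset.mem_erase] at ha
    exact hD'E (Finset.mem_coe.mpr ha.2)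
  obtain ⟨a, b, p, hp, haB, hbB, hab, hint1, hC1⟩ := h1
  obtain ⟨c, d, q, hq, hcB, hdB, hcd, hint2, hC2⟩ := h2
  have hpe : ∀ e' ∈ p.edges, e' ∈ H.edgeSet := by
    intro e' he'
    rw [hH, SimpleGraph.edgeSet_fromEdgeSet]
    exact ⟨Finset.mem_coe.mpr (hs1 (by rw [hC1]; exact List.mem_toFinset.mpr he')),
      Γ.not_isDiag_of_mem_edgeSet (p.edges_subset_edgeSet he')⟩
  have hqe : ∀ e' ∈ q.edges, e' ∈ H.edgeSet := by
    intro e' he'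
    rw [hH, SimpleGraph.edgeSet_fromEdgeSet]
    exact ⟨Finset.mem_coe.mpr (hs2 (by rw [hC2]; exact List.mem_toFinset.mpr he')),
      Γ.not_isDiag_of_mem_edgeSet (q.edges_subset_edgeSet he')⟩
  have hp' := hp.transfer hpe
  have hq' := hq.transfer hqe
  have hpedge : s(u,x) ∈ (p.transfer H hpe).edges := by
    rw [SimpleGraph.Walk.edges_transfer]
    refine List.mem_toFinset.mp ?_
    rw [← hC1]; exact he1
  have hqedge : s(u,x) ∈ (q.transfer H hqe).edges := by
    rw [SimpleGraph.Walk.edges_transfer]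
    refine List.mem_toFinset.mp ?_
    rw [← hC2]; exact he2
  have same_dir : a = c → b = d → False := by
    intro hac hbd
    subst hac; subst hbd
    apply hne
    rw [hC1, hC2]
    have hpath := SimpleGraph.isAcyclic_iff_path_unique.mp hforest
      ⟨p.transfer H hpe, hp'⟩ ⟨q.transfer H hqe, hq'⟩
    have h' := congrArg (fun r : H.Path a b => r.1.edges) hpath
    simp only [SimpleGraph.Walk.edges_transfer] at h'
    rw [h']
  have rev_dir : a = d → b = c → False := by
    intro had hbc
    subst had; subst hbc
    apply hne
    rw [hC1, hC2]
    have hrev := hq'.reverse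
    have hpath := SimpleGraph.isAcyclic_iff_path_unique.mp hforest
      ⟨p.transfer H hpe, hp'⟩ ⟨(q.transfer H hqe).reverse, hrev⟩
    have h' := congrArg (fun r : H.Path a b => r.1.edges) hpath
    simp only [SimpleGraph.Walk.edges_reverse, SimpleGraph.Walk.edges_transfer] at h'
    rw [h', List.toFinset_reverse]
  rcases path_delete_reach (p.transfer H hpe) hp' hpedge with ⟨hra, hrb⟩ | ⟨hra, hrb⟩ <;>
    rcases path_delete_reach (q.transfer H hqe) hq' hqedge with ⟨hrc, hrd⟩ | ⟨hrc, hrd⟩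
  · by_cases hac : a = c
    · by_cases hbd : b = d
      · exact (same_dir hac hbd).elim
      · exact key b d hbB hdB hbd (hrb.trans hrd.symm)
    · exact key a c haB hcB hac (hra.trans hrc.symm)
  · by_cases had : a = d
    · by_cases hbc : b = c
      · exact (rev_dir had hbc).elim
      · exact key b c hbB hcB hbc (hrb.trans hrc.symm)
    · exact key a d haB hdB had (hra.trans hrd.symm)
  · by_cases had : a = d
    · by_cases hbc : b = c
      · exact (rev_dir had hbc).elim
      · exact key b c hbB hcB hbc (hrb.trans hrc.symm)
    · exact key a d haB hdB had (hra.trans hrd.symm)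
  · by_cases hac : a = c
    · by_cases hbd : b = d
      · exact (same_dir hac hbd).elim
      · exact key b d hbB hdB hbd (hrb.trans hrd.symm)
    · exact key a c haB hcB hac (hra.trans hrc.symm)

lemma exists_circuit_of_dep {Γ : SimpleGraph V} {B : Finset V} (S : Finset (Option (Sym2 V)))
    (hg : S ⊆ ground Γ) (hd : ¬ Indep Γ B S) : ∃ D, D ⊆ S ∧ IsCircuit Γ B D := by
  obtain ⟨D, hDS, hD1, hD2⟩ := exists_minimal_not (Indep Γ B) S.card S le_rfl hd
  exact ⟨D, hDS, hDS.trans hg, hD1, hD2⟩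

lemma exists_circuitG_of_not_acyclic {Γ : SimpleGraph V} (S : Finset (Sym2 V))
    (hg : (S : Set (Sym2 V)) ⊆ Γ.edgeSet)
    (hd : ¬ (SimpleGraph.fromEdgeSet (S : Set (Sym2 V))).IsAcyclic) :
    ∃ C, C ⊆ S ∧ IsCircuitG Γ C := by
  obtain ⟨D, hDS, hD1, hD2⟩ := exists_minimal_not
    (fun Y : Finset (Sym2 V) => (SimpleGraph.fromEdgeSet (Y : Set (Sym2 V))).IsAcyclic)
    S.card S le_rfl hd
  have hDE : (D : Set (Sym2 V)) ⊆ Γ.edgeSet := (Finset.coe_subset.mpr hDS).trans hg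
  exact ⟨D, hDS, hDE, fun h => hD1 h.2,
    fun Y hY => ⟨(Finset.coe_subset.mpr hY.subset).trans hDE, hD2 Y hY⟩⟩

lemma some_mem_ground {Γ : SimpleGraph V} {e : Sym2 V} :
    some e ∈ ground Γ ↔ e ∈ Γ.edgeSet := by
  simp [ground]

lemma ground_cases {Γ : SimpleGraph V} {o : Option (Sym2 V)} (h : o ∈ ground Γ) :
    o = none ∨ ∃ e, o = some e ∧ e ∈ Γ.edgeSet := by
  rw [ground, Finset.mem_insert] at h
  rcases h with h | h
  · exact Or.inl h
  · obtain ⟨e, he, rfl⟩ := Finset.mem_image.mp h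
    rw [Finset.mem_filter] at he
    exact Or.inr ⟨e, rfl, he.2⟩

lemma subset_of_image_some_subset {A F : Finset (Sym2 V)}
    (h : A.image some ⊆ F.image some) : A ⊆ F := by
  intro a ha
  have := h (Finset.mem_image_of_mem some ha)
  obtain ⟨b, hb, hba⟩ := Finset.mem_image.mp this
  rwa [← Option.some.inj hba]

lemma subset_of_subset_insert_none {A F : Finset (Sym2 V)}
    (h : A.image some ⊆ insert none (F.image some)) : A ⊆ F := by
  intro a ha
  have := h (Finset.mem_image_of_mem some ha)
  rw [Finset.mem_insert] at this
  rcases this with h' | h'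
  · exact (Option.some_ne_none _ h').elim
  · obtain ⟨b, hb, hba⟩ := Finset.mem_image.mp h'
    rwa [← Option.some.inj hba]

lemma grove_forest_subset {Γ : SimpleGraph V} {B : Finset V} {F A : Finset (Sym2 V)}
    (hg : IsGrove Γ B F) (hAF : A ⊆ F) :
    (SimpleGraph.fromEdgeSet (A : Set (Sym2 V))).IsAcyclic :=
  isAcyclic_mono (SimpleGraph.fromEdgeSet_mono (Finset.coe_subset.mpr hAF)) hg.2.1

lemma exists_grove_of_indep_image {Γ : SimpleGraph V} {B : Finset V} {A : Finset (Sym2 V)}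
    (h : Indep Γ B (A.image some)) : ∃ F, IsGrove Γ B F ∧ A ⊆ F := by
  rcases h with ⟨F, hF, hsub⟩ | ⟨F, hF, hsub⟩
  · exact ⟨F, hF.1, subset_of_image_some_subset hsub⟩
  · exact ⟨F, hF.1, subset_of_subset_insert_none hsub⟩


/-- **Reduced broken circuit complex of the Dirichlet matroid** (Lemma 4.9 of
Lutz): fix a linear order on `Ē = E ∪ {ê}` with `ê` minimal. For `X ⊆ E`: `X`
contains no broken circuit of `M(N)` iff `X` contains no broken circuit of the
graphic matroid `M(Γ)` and `X` contains no crossing of `N`. -/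
theorem reduced_broken_circuit_complex
    (Γ : SimpleGraph V) (B : Finset V) (hN : IsNetwork Γ B)
    (ord : Option (Sym2 V) → ℕ) (hord : Function.Injective ord)
    (hmin : ∀ o : Option (Sym2 V), ord none ≤ ord o)
    (X : Finset (Sym2 V)) (hX : (X : Set (Sym2 V)) ⊆ Γ.edgeSet) :
    (∀ Y, IsBrokenCircuit (IsCircuit Γ B) ord Y → ¬ Y ⊆ X.image some) ↔
      ((∀ Y, IsBrokenCircuit (IsCircuitG Γ) (fun e => ord (some e)) Y → ¬ Y ⊆ X) ∧
       ∀ C, IsCrossing Γ B C → ¬ C ⊆ X) := by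
  constructor
  · intro hL
    constructor
    · -- no graphic broken circuit in X
      rintro Y ⟨C, m, hCirc, hmC, hmin', rfl⟩ hYX
      obtain ⟨hCE, hCdep, hCmin⟩ := hCirc
      have hCnotac : ¬ (SimpleGraph.fromEdgeSet (C : Set (Sym2 V))).IsAcyclic :=
        fun h => hCdep ⟨hCE, h⟩
      have hdep : ¬ Indep Γ B (C.image some) := by
        intro h
        obtain ⟨F, hF, hCF⟩ := exists_grove_of_indep_image h
        exact hCnotac (grove_forest_subset hF hCF)
      have hground : C.image some ⊆ ground Γ := by
        intro o ho
        obtain ⟨e, he, rfl⟩ := Finset.mem_image.mp ho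
        exact some_mem_ground.mpr (hCE (Finset.mem_coe.mpr he))
      obtain ⟨D, hDsub, hD⟩ := exists_circuit_of_dep _ hground hdep
      have hDne : D.Nonempty := by
        rw [Finset.nonempty_iff_ne_empty]
        intro h0
        rw [h0] at hD
        exact hD.2.1 (indep_empty hN)
      obtain ⟨m', hm'D, hm'min⟩ := D.exists_min_image ord hDne
      refine hL (D.erase m') ⟨D, m', hD, hm'D, hm'min, rfl⟩ ?_
      by_cases hmem : some m ∈ D
      · have hm' : m' = some m := by
          refine hord (le_antisymm (hm'min _ hmem) ?_)
          obtain ⟨e, he, heq⟩ := Finset.mem_image.mp (hDsub hm'D)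
          rw [← heq]
          exact hmin' e he
        subst hm'
        intro o ho
        rw [Finset.mem_erase] at ho
        obtain ⟨e, he, rfl⟩ := Finset.mem_image.mp (hDsub ho.2)
        refine Finset.mem_image_of_mem some (hYX ?_)
        rw [Finset.mem_erase]
        exact ⟨fun h => ho.1 (by rw [h]), he⟩
      · intro o ho
        rw [Finset.mem_erase] at ho
        obtain ⟨e, he, rfl⟩ := Finset.mem_image.mp (hDsub ho.2)
        refine Finset.mem_image_of_mem some (hYX ?_)
        rw [Finset.mem_erase]
        refine ⟨fun h => hmem ?_, he⟩
        rw [← h]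
        exact ho.2
    · -- no crossing in X
      intro C hC hCX
      have hground : insert none (C.image some) ⊆ ground Γ := by
        intro o ho
        rw [Finset.mem_insert] at ho
        rcases ho with rfl | ho
        · exact Finset.mem_insert_self _ _
        · obtain ⟨e, he, rfl⟩ := Finset.mem_image.mp ho
          exact some_mem_ground.mpr (crossing_edge_subset hC (Finset.mem_coe.mpr he))
      have hdep : ¬ Indep Γ B (insert none (C.image some)) := by
        rintro (⟨F, hF, hsub⟩ | ⟨F, hF, hsub⟩)
        · have := hsub (Finset.mem_insert_self _ _)
          obtain ⟨e, -, he⟩ := Finset.mem_image.mp this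
          exact Option.some_ne_none _ he
        · refine hF.2 C hC ?_
          intro e he
          have hmm := hsub (Finset.mem_insert_of_mem (Finset.mem_image_of_mem some he))
          rw [Finset.mem_insert] at hmm
          rcases hmm with h | h
          · exact (Option.some_ne_none _ h).elim
          · obtain ⟨e', he', heq⟩ := Finset.mem_image.mp h
            rwa [← Option.some.inj heq]
      obtain ⟨D, hDsub, hD⟩ := exists_circuit_of_dep _ hground hdep
      have hDne : D.Nonempty := by
        rw [Finset.nonempty_iff_ne_empty]
        intro h0
        rw [h0] at hD
        exact hD.2.1 (indep_empty hN)
      obtain ⟨m', hm'D, hm'min⟩ := D.exists_min_image ord hDne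
      refine hL (D.erase m') ⟨D, m', hD, hm'D, hm'min, rfl⟩ ?_
      intro o ho
      rw [Finset.mem_erase] at ho
      have hoD := hDsub ho.2
      rw [Finset.mem_insert] at hoD
      rcases hoD with rfl | hoD
      · exact absurd (hord (le_antisymm (hm'min none ho.2) (hmin m'))).symm ho.1
      · obtain ⟨e, he, rfl⟩ := Finset.mem_image.mp hoD
        exact Finset.mem_image_of_mem some (hCX he)
  · rintro ⟨hG, hC⟩ Y ⟨D, m, hD, hmD, hmmin, rfl⟩ hYX
    obtain ⟨hDg, hDdep, hDmin⟩ := hD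
    set D' : Finset (Sym2 V) := Finset.univ.filter (fun a => some a ∈ D) with hD'def
    have hD'mem : ∀ a : Sym2 V, a ∈ D' ↔ some a ∈ D := by
      intro a; simp [hD'def]
    have hD'img : D'.image some = D.erase none := by
      apply Finset.ext
      intro o
      rw [Finset.mem_erase]
      constructor
      · intro ho
        obtain ⟨a, ha, rfl⟩ := Finset.mem_image.mp ho
        exact ⟨fun h => Option.some_ne_none _ h, (hD'mem a).mp ha⟩
      · rintro ⟨hne, hoD⟩
        rcases ground_cases (hDg hoD) with rfl | ⟨e, rfl, heE⟩
        · exact absurd rfl hne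
        · exact Finset.mem_image_of_mem some ((hD'mem e).mpr hoD)
    have hD'E : (D' : Set (Sym2 V)) ⊆ Γ.edgeSet := by
      intro a ha
      rw [Finset.mem_coe, hD'mem] at ha
      rcases ground_cases (hDg ha) with h | ⟨e, he, heE⟩
      · exact (Option.some_ne_none _ h).elim
      · rwa [Option.some.inj he]
    by_cases hnone : none ∈ D
    · -- m = none case
      have hm : m = none := hord (le_antisymm (hmmin none hnone) (hmin m))
      subst hm
      have hD'X : D' ⊆ X := by
        intro a ha
        have hmm : some a ∈ D.erase none :=
          Finset.mem_erase.mpr ⟨fun h => Option.some_ne_none _ h, (hD'mem a).mp ha⟩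
        obtain ⟨e, heX, heq⟩ := Finset.mem_image.mp (hYX hmm)
        rwa [← Option.some.inj heq]
      have hindep : Indep Γ B (D'.image some) := by
        rw [hD'img]
        exact hDmin _ (Finset.erase_ssubset hnone)
      obtain ⟨F, hFg, hD'F⟩ := exists_grove_of_indep_image hindep
      have hac : (SimpleGraph.fromEdgeSet (D' : Set (Sym2 V))).IsAcyclic :=
        grove_forest_subset hFg hD'F
      obtain ⟨Fs, hFsg, hsubs, hcrs⟩ := grove_extend' hN D' hD'E hac
      have hnS0 : ¬ Sigma0 Γ B Fs := by
        intro hS0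
        refine hDdep (Or.inr ⟨Fs, hS0, ?_⟩)
        intro o hoD
        rcases ground_cases (hDg hoD) with rfl | ⟨e, rfl, heE⟩
        · exact Finset.mem_insert_self _ _
        · exact Finset.mem_insert_of_mem
            (Finset.mem_image_of_mem some (hsubs ((hD'mem e).mpr hoD)))
      obtain ⟨C₁, hC₁, hC₁F⟩ : ∃ Cc, IsCrossing Γ B Cc ∧ Cc ⊆ Fs := by
        have h' : ¬ ∀ Cc, IsCrossing Γ B Cc → ¬ Cc ⊆ Fs := fun hall => hnS0 ⟨hFsg, hall⟩
        push_neg at h'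
        exact h'
      exact hC C₁ hC₁ ((hcrs C₁ hC₁ hC₁F).trans hD'X)
    · -- none ∉ D
      have hDimg : D'.image some = D := by
        rw [hD'img, Finset.erase_eq_of_notMem hnone]
      obtain ⟨e, hm⟩ : ∃ e, m = some e := by
        rcases ground_cases (hDg hmD) with h | ⟨e, he, -⟩
        · exact absurd (h ▸ hmD) hnone
        · exact ⟨e, he⟩
      subst hm
      have heD' : e ∈ D' := (hD'mem e).mpr hmD
      have heminD' : ∀ a ∈ D', ord (some e) ≤ ord (some a) :=
        fun a ha => hmmin _ ((hD'mem a).mp ha)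
      have hDerase : D'.erase e ⊆ X := by
        intro a ha
        rw [Finset.mem_erase] at ha
        have hmm : some a ∈ D.erase (some e) :=
          Finset.mem_erase.mpr ⟨fun h => ha.1 (Option.some.inj h), (hD'mem a).mp ha.2⟩
        obtain ⟨b, hbX, hbeq⟩ := Finset.mem_image.mp (hYX hmm)
        rwa [← Option.some.inj hbeq]
      by_cases hac : (SimpleGraph.fromEdgeSet (D' : Set (Sym2 V))).IsAcyclic
      · obtain ⟨Fs, hFsg, hsubs, hcrs⟩ := grove_extend' hN D' hD'E hac
        have hnS0 : ¬ Sigma0 Γ B Fs := by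
          intro hS0
          refine hDdep (Or.inr ⟨Fs, hS0, ?_⟩)
          rw [← hDimg]
          exact (Finset.image_subset_image hsubs).trans (Finset.subset_insert _ _)
        have hnS1 : ¬ Sigma1 Γ B Fs := by
          intro hS1
          refine hDdep (Or.inl ⟨Fs, hS1, ?_⟩)
          rw [← hDimg]
          exact Finset.image_subset_image hsubs
        obtain ⟨C₁, hC₁, hC₁F⟩ : ∃ Cc, IsCrossing Γ B Cc ∧ Cc ⊆ Fs := by
          have h' : ¬ ∀ Cc, IsCrossing Γ B Cc → ¬ Cc ⊆ Fs := fun hall => hnS0 ⟨hFsg, hall⟩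
          push_neg at h'
          exact h'
        obtain ⟨C₂, hC₂, hC₂ne⟩ : ∃ Cc, (IsCrossing Γ B Cc ∧ Cc ⊆ Fs) ∧ Cc ≠ C₁ := by
          by_contra hcon
          push_neg at hcon
          exact hnS1 ⟨hFsg, C₁, ⟨hC₁, hC₁F⟩, fun Cc hc => hcon Cc hc⟩
        have hC₁D' := hcrs C₁ hC₁ hC₁F
        have hC₂D' := hcrs C₂ hC₂.1 hC₂.2
        by_cases he1 : e ∈ C₁
        · by_cases he2 : e ∈ C₂
          · obtain ⟨C₃, hC₃, hC₃sub⟩ := crossing_swap_lemma Γ B D' hD'E hac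
              hC₂.1 hC₁ hC₂D' hC₁D' hC₂ne he2 he1
            exact hC C₃ hC₃ (hC₃sub.trans hDerase)
          · exact hC C₂ hC₂.1 ((Finset.subset_erase.mpr ⟨hC₂D', he2⟩).trans hDerase)
        · exact hC C₁ hC₁ ((Finset.subset_erase.mpr ⟨hC₁D', he1⟩).trans hDerase)
      · obtain ⟨Cg, hCgD', hCg⟩ := exists_circuitG_of_not_acyclic D' hD'E hac
        have hCgne : Cg.Nonempty := by
          rw [Finset.nonempty_iff_ne_empty]
          intro h0
          rw [h0] at hCg
          refine hCg.2.1 ⟨by simp, ?_⟩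
          rw [Finset.coe_empty, SimpleGraph.fromEdgeSet_empty]
          exact SimpleGraph.isAcyclic_bot
        obtain ⟨f, hfC, hfmin⟩ := Cg.exists_min_image (fun a => ord (some a)) hCgne
        refine hG (Cg.erase f) ⟨Cg, f, hCg, hfC, hfmin, rfl⟩ ?_
        by_cases hef : e ∈ Cg
        · have hfe : f = e := by
            have h1 : ord (some f) ≤ ord (some e) := hfmin e hef
            have h2 : ord (some e) ≤ ord (some f) := heminD' f (hCgD' hfC)
            exact Option.some.inj (hord (le_antisymm h1 h2))
          subst hfe
          exact (Finset.erase_subset_erase f hCgD').trans hDerase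
        · intro a ha
          rw [Finset.mem_erase] at ha
          exact hDerase (Finset.mem_erase.mpr ⟨fun h => hef (h ▸ ha.2), hCgD' ha.2⟩)
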